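/- Let H and G be groups, let Y ⊆ H, and let α : Y → G be a function. If the graph Γ_α = {(s, α(s)) : s ∈ Y} belongs to the coset ring Ω(H × G) of the product group H × G, then α is piecewise affine. -/

import Mathlib

open Pointwise

/-- A *coset* of a group `G` is a subset `C` for which there exist a subgroup `N` of `G`
and an element `s ∈ G` with `C = s • N`. -/
def IsCoset {G : Type*} [Group G] (C : Set G) : Prop :=
  ∃ (N : Subgroup G) (s : G), C = s • (N : Set G)

/-- The *coset ring* `Ω(G)` of a group `G`: the smallest family of subsets of `G`
containing the empty set and every coset and closed under finite unions, finite
intersections and set differences. -/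
inductive InCosetRing (G : Type*) [Group G] : Set G → Prop
  | empty : InCosetRing G ∅
  | coset (s : G) (N : Subgroup G) : InCosetRing G (s • (N : Set G))
  | union ⦃A B : Set G⦄ : InCosetRing G A → InCosetRing G B → InCosetRing G (A ∪ B)
  | inter ⦃A B : Set G⦄ : InCosetRing G A → InCosetRing G B → InCosetRing G (A ∩ B)
  | sdiff ⦃A B : Set G⦄ : InCosetRing G A → InCosetRing G B → InCosetRing G (A \ B)

/-- A map `α : C → G` defined on a subset `C` of `H` is *affine* if
`α (r * s⁻¹ * t) = α r * (α s)⁻¹ * α t` for all `r, s, t ∈ C`. -/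
def IsAffineOn {H G : Type*} [Group H] [Group G] (α : H → G) (C : Set H) : Prop :=
  ∀ r ∈ C, ∀ s ∈ C, ∀ t ∈ C, α (r * s⁻¹ * t) = α r * (α s)⁻¹ * α t

/-- A map `α : Y → G` with `Y ⊆ H` is *piecewise affine* if `Y` is a finite disjoint
union of sets `Yᵢ` of the coset ring of `H`, each contained in a coset `Lᵢ` carrying
an affine map `αᵢ : Lᵢ → G` which agrees with `α` on `Yᵢ`. -/
def IsPiecewiseAffineOn {H G : Type*} [Group H] [Group G] (α : H → G) (Y : Set H) : Prop :=
  ∃ (n : ℕ) (Ys : Fin n → Set H),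
    (∀ i, InCosetRing H (Ys i)) ∧
    Pairwise (Function.onFun Disjoint Ys) ∧
    Y = ⋃ i, Ys i ∧
    ∀ i, ∃ L : Set H, IsCoset L ∧ Ys i ⊆ L ∧
      ∃ αi : H → G, IsAffineOn αi L ∧ Set.EqOn αi α (Ys i)

/-- The graph of a map `α : Y → G` with `Y ⊆ H`, as a subset of `H × G`. -/
def graphOn {H G : Type*} (α : H → G) (Y : Set H) : Set (H × G) :=
  {p : H × G | p.1 ∈ Y ∧ p.2 = α p.1}


section Aux
variable {A : Type*} [Group A]
open Set

lemma coset_rebase {M : Subgroup A} {x z : A} (hz : z ∈ x • (M : Set A)) :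
    x • (M : Set A) = z • (M : Set A) := by
  obtain ⟨m, hm, rfl⟩ := hz
  show x • (M : Set A) = (x • m) • (M : Set A)
  rw [smul_eq_mul, mul_smul, smul_coe_set hm]

lemma coset_eq_or_disjoint (M : Subgroup A) (x y : A) :
    x • (M : Set A) = y • (M : Set A) ∨ (x • (M : Set A)) ∩ (y • (M : Set A)) = ∅ := by
  by_cases h : ((x • (M : Set A)) ∩ (y • (M : Set A))).Nonempty
  · obtain ⟨z, hz1, hz2⟩ := h
    exact Or.inl ((coset_rebase hz1).trans (coset_rebase hz2).symm)
  · exact Or.inr (Set.not_nonempty_iff_eq_empty.mp h)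

lemma isCoset_inter {C C' : Set A} (hC : IsCoset C) (hC' : IsCoset C') :
    IsCoset (C ∩ C') ∨ C ∩ C' = ∅ := by
  obtain ⟨N, s, rfl⟩ := hC
  obtain ⟨M, t, rfl⟩ := hC'
  by_cases h : ((s • (N : Set A)) ∩ (t • (M : Set A))).Nonempty
  · obtain ⟨z, hz1, hz2⟩ := h
    rw [coset_rebase hz1, coset_rebase hz2, ← Set.smul_set_inter]
    exact Or.inl ⟨N ⊓ M, z, by rw [Subgroup.coe_inf]⟩
  · exact Or.inr (Set.not_nonempty_iff_eq_empty.mp h)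

/-- cosets or empty sets -/
def CosE (C : Set A) : Prop := IsCoset C ∨ C = ∅

lemma CosE.inter {C C' : Set A} (hC : CosE C) (hC' : CosE C') : CosE (C ∩ C') := by
  rcases hC with hC | rfl
  · rcases hC' with hC' | rfl
    · exact isCoset_inter hC hC'
    · exact Or.inr (Set.inter_empty _)
  · exact Or.inr (Set.empty_inter _)

lemma subcoset_norm {N : Subgroup A} {c : A} {D : Set A} (hD : IsCoset D)
    (hsub : D ⊆ c • (N : Set A)) :
    ∃ (M : Subgroup A) (x : A), x ∈ D ∧ M ≤ N ∧ D = x • (M : Set A) := by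
  obtain ⟨M, d, rfl⟩ := hD
  have hd : d ∈ d • (M : Set A) := ⟨1, M.one_mem, mul_one d⟩
  refine ⟨M, d, hd, ?_, rfl⟩
  intro m hm
  have h1 : c⁻¹ * d ∈ N := by
    have := hsub hd; rwa [Set.mem_smul_set_iff_inv_smul_mem] at this
  have h2 : c⁻¹ * (d * m) ∈ N := by
    have := hsub ⟨m, hm, rfl⟩; rwa [Set.mem_smul_set_iff_inv_smul_mem] at this
  have : (c⁻¹ * d)⁻¹ * (c⁻¹ * (d * m)) ∈ N := N.mul_mem (N.inv_mem h1) h2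
  simpa [mul_assoc] using this

end Aux

section Pieces
variable {A : Type*} [Group A]
open Set

/-- A "piece": a coset (or empty set) minus finitely many subsets which are
cosets or empty. -/
def IsPiece (P : Set A) : Prop :=
  ∃ (C : Set A) (𝒟 : Finset (Set A)), CosE C ∧ (∀ D ∈ 𝒟, CosE D ∧ D ⊆ C) ∧ P = C \ ⋃₀ ↑𝒟

/-- Finite unions of pieces. -/
def FU (S : Set A) : Prop :=
  ∃ 𝒮 : Finset (Set A), (∀ P ∈ 𝒮, IsPiece P) ∧ S = ⋃₀ ↑𝒮

lemma CosE.isPiece {C : Set A} (hC : CosE C) : IsPiece C :=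
  ⟨C, ∅, hC, by simp, by simp⟩

lemma isPiece_inter {P Q : Set A} (hP : IsPiece P) (hQ : IsPiece Q) : IsPiece (P ∩ Q) := by
  classical
  obtain ⟨C, 𝒟, hC, h𝒟, rfl⟩ := hP
  obtain ⟨C', 𝒟', hC', h𝒟', rfl⟩ := hQ
  refine ⟨C ∩ C', (𝒟 ∪ 𝒟').image (· ∩ (C ∩ C')), hC.inter hC', ?_, ?_⟩
  · intro D hD
    simp only [Finset.mem_image, Finset.mem_union] at hD
    obtain ⟨E, hE, rfl⟩ := hD
    exact ⟨((hE.elim (fun h => (h𝒟 E h).1) (fun h => (h𝒟' E h).1))).inter (hC.inter hC'),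
      Set.inter_subset_right⟩
  · ext x
    simp only [Set.mem_inter_iff, Set.mem_diff, Set.mem_sUnion, Finset.mem_coe,
      Finset.mem_image, Finset.mem_union]
    constructor
    · rintro ⟨⟨hxC, hD⟩, hxC', hD'⟩
      refine ⟨⟨hxC, hxC'⟩, ?_⟩
      rintro ⟨E, ⟨F, hF | hF, rfl⟩, hxE⟩
      · exact hD ⟨F, hF, hxE.1⟩
      · exact hD' ⟨F, hF, hxE.1⟩
    · rintro ⟨⟨hxC, hxC'⟩, hE⟩
      refine ⟨⟨hxC, ?_⟩, hxC', ?_⟩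
      · rintro ⟨F, hF, hxF⟩
        exact hE ⟨F ∩ (C ∩ C'), ⟨F, Or.inl hF, rfl⟩, hxF, hxC, hxC'⟩
      · rintro ⟨F, hF, hxF⟩
        exact hE ⟨F ∩ (C ∩ C'), ⟨F, Or.inr hF, rfl⟩, hxF, hxC, hxC'⟩

lemma isPiece_diff_cosE {P C' : Set A} (hP : IsPiece P) (hC' : CosE C') : IsPiece (P \ C') := by
  classical
  obtain ⟨C, 𝒟, hC, h𝒟, rfl⟩ := hP
  refine ⟨C, insert (C' ∩ C) 𝒟, hC, ?_, ?_⟩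
  · intro D hD
    rcases Finset.mem_insert.mp hD with rfl | hD
    · exact ⟨hC'.inter hC, Set.inter_subset_right⟩
    · exact h𝒟 D hD
  · ext x
    simp only [Set.mem_diff, Set.mem_sUnion, Finset.mem_coe, Finset.coe_insert,
      Set.mem_insert_iff]
    constructor
    · rintro ⟨⟨hxC, hD⟩, hxC'⟩
      refine ⟨hxC, ?_⟩
      rintro ⟨E, rfl | hE, hxE⟩
      · exact hxC' hxE.1
      · exact hD ⟨E, hE, hxE⟩
    · rintro ⟨hxC, hE⟩
      refine ⟨⟨hxC, ?_⟩, fun hxC' => hE ⟨C' ∩ C, Or.inl rfl, hxC', hxC⟩⟩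
      rintro ⟨F, hF, hxF⟩
      exact hE ⟨F, Or.inr hF, hxF⟩

lemma FU_empty : FU (∅ : Set A) := ⟨∅, by simp, by simp⟩

lemma IsPiece.fu {P : Set A} (hP : IsPiece P) : FU P := ⟨{P}, by simpa, by simp⟩

lemma FU.union {S T : Set A} (hS : FU S) (hT : FU T) : FU (S ∪ T) := by
  classical
  obtain ⟨𝒮, h𝒮, rfl⟩ := hS
  obtain ⟨𝒯, h𝒯, rfl⟩ := hT
  exact ⟨𝒮 ∪ 𝒯, fun P hP => (Finset.mem_union.mp hP).elim (h𝒮 P) (h𝒯 P),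
    by rw [Finset.coe_union, Set.sUnion_union]⟩

lemma FU_biUnion {ι : Type*} (t : Finset ι) (f : ι → Set A) (h : ∀ i ∈ t, FU (f i)) :
    FU (⋃ i ∈ t, f i) := by
  classical
  induction t using Finset.induction_on with
  | empty => simpa using FU_empty
  | @insert a t' hnot ih =>
    rw [Finset.set_biUnion_insert]
    exact (h _ (Finset.mem_insert_self _ _)).union
      (ih fun i hi => h i (Finset.mem_insert_of_mem hi))

lemma FU.inter {S T : Set A} (hS : FU S) (hT : FU T) : FU (S ∩ T) := by
  classical
  obtain ⟨𝒮, h𝒮, rfl⟩ := hS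
  obtain ⟨𝒯, h𝒯, rfl⟩ := hT
  refine ⟨(𝒮 ×ˢ 𝒯).image fun p => p.1 ∩ p.2, ?_, ?_⟩
  · intro P hP
    simp only [Finset.mem_image, Finset.mem_product] at hP
    obtain ⟨⟨P₁, P₂⟩, ⟨h1, h2⟩, rfl⟩ := hP
    exact isPiece_inter (h𝒮 _ h1) (h𝒯 _ h2)
  · ext x
    simp only [Set.mem_inter_iff, Set.mem_sUnion, Finset.mem_coe, Finset.mem_image,
      Finset.mem_product]
    constructor
    · rintro ⟨⟨P, hP, hxP⟩, ⟨Q, hQ, hxQ⟩⟩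
      exact ⟨P ∩ Q, ⟨⟨P, Q⟩, ⟨hP, hQ⟩, rfl⟩, hxP, hxQ⟩
    · rintro ⟨E, ⟨⟨P, Q⟩, ⟨hP, hQ⟩, rfl⟩, hxP, hxQ⟩
      exact ⟨⟨P, hP, hxP⟩, ⟨Q, hQ, hxQ⟩⟩

lemma isPiece_diff_piece {P Q : Set A} (hP : IsPiece P) (hQ : IsPiece Q) : FU (P \ Q) := by
  classical
  obtain ⟨C', 𝒟', hC', h𝒟', rfl⟩ := hQ
  have key : P \ (C' \ ⋃₀ ↑𝒟') = (P \ C') ∪ ⋃ E ∈ 𝒟', P ∩ E := by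
    ext x
    constructor
    · rintro ⟨hxP, hxQ⟩
      by_cases hxC' : x ∈ C'
      · have hx : x ∈ ⋃₀ (↑𝒟' : Set (Set A)) := by
          by_contra h
          exact hxQ ⟨hxC', h⟩
        obtain ⟨E, hE, hxE⟩ := hx
        exact Or.inr (Set.mem_biUnion (Finset.mem_coe.mp hE) ⟨hxP, hxE⟩)
      · exact Or.inl ⟨hxP, hxC'⟩
    · rintro (⟨hxP, hxC'⟩ | hx)
      · exact ⟨hxP, fun h => hxC' h.1⟩
      · simp only [Set.mem_iUnion, Set.mem_inter_iff, exists_prop] at hx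
        obtain ⟨E, hE, hxP, hxE⟩ := hx
        exact ⟨hxP, fun h => h.2 ⟨E, Finset.mem_coe.mpr hE, hxE⟩⟩
  rw [key]
  exact (isPiece_diff_cosE hP hC').fu.union
    (FU_biUnion 𝒟' _ fun E hE => (isPiece_inter hP ((h𝒟' E hE).1).isPiece).fu)

lemma FU.diff_piece {S Q : Set A} (hS : FU S) (hQ : IsPiece Q) : FU (S \ Q) := by
  classical
  obtain ⟨𝒮, h𝒮, rfl⟩ := hS
  have : ⋃₀ (↑𝒮 : Set (Set A)) \ Q = ⋃ P ∈ 𝒮, P \ Q := by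
    ext x
    simp only [Set.mem_diff, Set.mem_sUnion, Finset.mem_coe, Set.mem_iUnion, exists_prop]
    tauto
  rw [this]
  exact FU_biUnion 𝒮 _ fun P hP => isPiece_diff_piece (h𝒮 P hP) hQ

lemma FU_diff_sUnion : ∀ (𝒯 : Finset (Set A)), (∀ Q ∈ 𝒯, IsPiece Q) →
    ∀ S : Set A, FU S → FU (S \ ⋃₀ ↑𝒯) := by
  classical
  intro 𝒯
  induction 𝒯 using Finset.induction_on with
  | empty => intro _ S hS; simpa using hS
  | @insert Q 𝒯' hnot ih =>
    intro h𝒯 S hS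
    have h1 : ⋃₀ (↑(insert Q 𝒯') : Set (Set A)) = Q ∪ ⋃₀ ↑𝒯' := by
      rw [Finset.coe_insert, Set.sUnion_insert]
    rw [h1, ← Set.diff_diff]
    exact ih (fun P hP => h𝒯 P (Finset.mem_insert_of_mem hP)) _
      (hS.diff_piece (h𝒯 Q (Finset.mem_insert_self _ _)))

lemma FU.diff {S T : Set A} (hS : FU S) (hT : FU T) : FU (S \ T) := by
  obtain ⟨𝒯, h𝒯, rfl⟩ := hT
  exact FU_diff_sUnion 𝒯 h𝒯 S hS

lemma InCosetRing.fu {S : Set A} (h : InCosetRing A S) : FU S := by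
  induction h with
  | empty => exact FU_empty
  | coset s N => exact (CosE.isPiece (Or.inl ⟨N, s, rfl⟩)).fu
  | union _ _ ihA ihB => exact ihA.union ihB
  | inter _ _ ihA ihB => exact ihA.inter ihB
  | sdiff _ _ ihA ihB => exact ihA.diff ihB

end Pieces

section GroupAux
variable {A : Type*} [Group A]
open Set

lemma exists_finite_relindex_of_cover {ι : Type*} (s : Finset ι) {N : Subgroup A}
    (M : ι → Subgroup A) (x : ι → A) (hx : ∀ j ∈ s, x j ∈ N)
    (hcov : (N : Set A) ⊆ ⋃ j ∈ s, x j • (M j : Set A)) :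
    ∃ j ∈ s, ((M j).subgroupOf N).FiniteIndex := by
  classical
  set g : ι → ↥N := fun j => if h : j ∈ s then ⟨x j, hx j h⟩ else 1 with hg
  have hcovers : ⋃ j ∈ s, g j • (((M j).subgroupOf N : Subgroup N) : Set N) = Set.univ := by
    rw [Set.eq_univ_iff_forall]
    intro n
    rw [Set.mem_iUnion₂]
    obtain ⟨j, hjs, hmem⟩ := Set.mem_iUnion₂.mp (hcov n.2)
    refine ⟨j, hjs, ?_⟩
    have hgj : g j = ⟨x j, hx j hjs⟩ := dif_pos hjs
    rw [mem_leftCoset_iff, SetLike.mem_coe, Subgroup.mem_subgroupOf, hgj]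
    rw [Set.mem_smul_set_iff_inv_smul_mem, smul_eq_mul] at hmem
    simpa using hmem
  obtain ⟨j, hjs, hj⟩ := Subgroup.exists_finiteIndex_of_leftCoset_cover hcovers
  exact ⟨j, hjs, hj⟩

lemma coset_cover_of_relindex {N M : Subgroup A} (hMN : M ≤ N)
    (hfin : (M.subgroupOf N).FiniteIndex) :
    ∃ t : Finset A, (∀ y ∈ t, y ∈ N) ∧ (N : Set A) = ⋃ y ∈ t, y • (M : Set A) := by
  classical
  haveI := hfin
  haveI : Fintype (↥N ⧸ M.subgroupOf N) := Fintype.ofFinite _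
  refine ⟨Finset.univ.image (fun q : ↥N ⧸ M.subgroupOf N => ((Quotient.out q : ↥N) : A)),
    ?_, ?_⟩
  · intro y hy
    simp only [Finset.mem_image, Finset.mem_univ, true_and] at hy
    obtain ⟨q, rfl⟩ := hy
    exact (Quotient.out q).2
  · ext a
    constructor
    · intro ha
      rw [SetLike.mem_coe] at ha
      have hmem : a ∈ ((Quotient.out (QuotientGroup.mk (⟨a, ha⟩ : ↥N) :
          ↥N ⧸ M.subgroupOf N) : ↥N) : A) • (M : Set A) := by
        rw [Set.mem_smul_set_iff_inv_smul_mem, smul_eq_mul]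
        have h2 : (Quotient.out (QuotientGroup.mk (⟨a, ha⟩ : ↥N) : ↥N ⧸ M.subgroupOf N))⁻¹
            * (⟨a, ha⟩ : ↥N) ∈ M.subgroupOf N := by
          rw [← QuotientGroup.eq, QuotientGroup.out_eq']
        simpa using Subgroup.mem_subgroupOf.mp h2
      exact Set.mem_biUnion (Finset.mem_image_of_mem _ (Finset.mem_univ _)) hmem
    · intro ha
      simp only [Set.mem_iUnion, exists_prop] at ha
      obtain ⟨y, hy, hmem⟩ := ha
      simp only [Finset.mem_image, Finset.mem_univ, true_and] at hy
      obtain ⟨q, rfl⟩ := hy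
      rw [Set.mem_smul_set_iff_inv_smul_mem, smul_eq_mul] at hmem
      have : a = ((Quotient.out q : ↥N) : A) * (((Quotient.out q : ↥N) : A)⁻¹ * a) := by
        group
      rw [SetLike.mem_coe, this]
      exact N.mul_mem (Quotient.out q).2 (hMN hmem)

lemma finite_relindex_of_comap_conj {N M : Subgroup A} {y : A} (hy : y ∈ N)
    (h : ((M.comap (MulAut.conj y).toMonoidHom).subgroupOf N).FiniteIndex) :
    (M.subgroupOf N).FiniteIndex := by
  have key : (M.comap (MulAut.conj y).toMonoidHom).subgroupOf N
      = (M.subgroupOf N).comap (MulAut.conj (⟨y, hy⟩ : N)).toMonoidHom := by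
    ext a
    simp [Subgroup.mem_subgroupOf, Subgroup.mem_comap, MulAut.conj_apply]
  rw [key] at h
  have hsurj : Function.Surjective ⇑(MulAut.conj (⟨y, hy⟩ : N)).toMonoidHom :=
    (MulAut.conj (⟨y, hy⟩ : N)).surjective
  exact ⟨by
    rw [← Subgroup.index_comap_of_surjective (M.subgroupOf N) hsurj]
    exact h.index_ne_zero⟩

lemma comap_conj_le {N M : Subgroup A} {y : A} (hy : y ∈ N) (hMN : M ≤ N) :
    M.comap (MulAut.conj y).toMonoidHom ≤ N := by
  intro x hx
  simp only [Subgroup.mem_comap, MulAut.conj_apply, MulEquiv.coe_toMonoidHom] at hx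
  have : x = y⁻¹ * (y * x * y⁻¹) * y := by group
  rw [this]
  exact N.mul_mem (N.mul_mem (N.inv_mem hy) (hMN hx)) hy

end GroupAux

section ProdAux
variable {H : Type*} {G : Type*} [Group H] [Group G]
open Set

lemma fst_image_coset (N : Subgroup (H × G)) (c : H × G) :
    Prod.fst '' (c • (N : Set (H × G)))
      = c.1 • ((N.map (MonoidHom.fst H G) : Subgroup H) : Set H) := by
  ext h
  constructor
  · rintro ⟨p, ⟨n, hn, rfl⟩, rfl⟩
    exact ⟨n.1, ⟨n, hn, rfl⟩, rfl⟩
  · rintro ⟨h₁, hh₁, rfl⟩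
    obtain ⟨n, hn, rfl⟩ := hh₁
    exact ⟨c * n, ⟨n, hn, rfl⟩, rfl⟩

lemma IsCoset.fst_image {C : Set (H × G)} (hC : IsCoset C) : IsCoset (Prod.fst '' C) := by
  obtain ⟨N, c, rfl⟩ := hC
  rw [fst_image_coset]
  exact ⟨_, _, rfl⟩

end ProdAux

section Main
variable {H : Type*} {G : Type*} [Group H] [Group G]
open Set

lemma InCosetRing.of_isCoset {A : Type*} [Group A] {C : Set A} (h : IsCoset C) :
    InCosetRing A C := by
  obtain ⟨N, s, rfl⟩ := h
  exact InCosetRing.coset s N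

lemma inCosetRing_biUnion {A : Type*} [Group A] {ι : Type*} (s : Finset ι) (f : ι → Set A)
    (h : ∀ i ∈ s, InCosetRing A (f i)) : InCosetRing A (⋃ i ∈ s, f i) := by
  classical
  induction s using Finset.induction_on with
  | empty => simpa using InCosetRing.empty
  | @insert a t hnot ih =>
    rw [Finset.set_biUnion_insert]
    exact (h a (Finset.mem_insert_self _ _)).union
      (ih fun i hi => h i (Finset.mem_insert_of_mem hi))

/-- Finite-union (not necessarily disjoint) form of piecewise-affineness. -/
def AlmostPW (α : H → G) (S : Set H) : Prop :=
  ∃ 𝒮 : Finset (Set H),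
    (∀ Y' ∈ 𝒮, InCosetRing H Y' ∧ ∃ L : Set H, IsCoset L ∧ Y' ⊆ L ∧
      ∃ β : H → G, IsAffineOn β L ∧ Set.EqOn β α Y') ∧ S = ⋃₀ ↑𝒮

lemma AlmostPW_empty (α : H → G) : AlmostPW α ∅ := ⟨∅, by simp, by simp⟩

lemma AlmostPW.union {α : H → G} {S T : Set H} (hS : AlmostPW α S) (hT : AlmostPW α T) :
    AlmostPW α (S ∪ T) := by
  classical
  obtain ⟨𝒮, h𝒮, rfl⟩ := hS
  obtain ⟨𝒯, h𝒯, rfl⟩ := hT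
  exact ⟨𝒮 ∪ 𝒯, fun P hP => (Finset.mem_union.mp hP).elim (h𝒮 P) (h𝒯 P),
    by rw [Finset.coe_union, Set.sUnion_union]⟩

lemma AlmostPW_biUnion {α : H → G} {ι : Type*} (t : Finset ι) (f : ι → Set H)
    (h : ∀ i ∈ t, AlmostPW α (f i)) : AlmostPW α (⋃ i ∈ t, f i) := by
  classical
  induction t using Finset.induction_on with
  | empty => simpa using AlmostPW_empty α
  | @insert a t' hnot ih =>
    rw [Finset.set_biUnion_insert]
    exact (h a (Finset.mem_insert_self _ _)).union
      (ih fun i hi => h i (Finset.mem_insert_of_mem hi))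

lemma isPiecewiseAffineOn_of_almostPW {α : H → G} {Y : Set H} (h : AlmostPW α Y) :
    IsPiecewiseAffineOn α Y := by
  classical
  obtain ⟨𝒮, h𝒮, rfl⟩ := h
  set l := 𝒮.toList with hl
  have hmem : ∀ i : Fin l.length, l.get i ∈ 𝒮 := by
    intro i
    rw [← Finset.mem_toList]
    exact List.get_mem l i
  set Ys : Fin l.length → Set H :=
    fun i => l.get i \ ⋃ j ∈ Finset.univ.filter (fun j : Fin l.length => j < i), l.get j
    with hYs
  have hYs_sub : ∀ i, Ys i ⊆ l.get i := fun i => Set.diff_subset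
  refine ⟨l.length, Ys, ?_, ?_, ?_, ?_⟩
  · intro i
    exact ((h𝒮 _ (hmem i)).1).sdiff
      (inCosetRing_biUnion _ _ fun j _ => (h𝒮 _ (hmem j)).1)
  · have key : ∀ i j : Fin l.length, i < j → Disjoint (Ys i) (Ys j) := by
      intro i j hij
      rw [Set.disjoint_left]
      intro x hxi hxj
      exact hxj.2 (Set.mem_biUnion (Finset.mem_filter.mpr ⟨Finset.mem_univ i, hij⟩)
        (hYs_sub i hxi))
    intro i j hne
    rcases lt_or_gt_of_ne hne with hlt | hgt
    · exact key i j hlt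
    · exact (key j i hgt).symm
  · ext x
    constructor
    · intro hx
      obtain ⟨P, hP, hxP⟩ := hx
      obtain ⟨i, hi⟩ := List.mem_iff_get.mp (Finset.mem_toList.mpr (Finset.mem_coe.mp hP))
      have hne : (Finset.univ.filter (fun i : Fin l.length => x ∈ l.get i)).Nonempty :=
        ⟨i, Finset.mem_filter.mpr ⟨Finset.mem_univ i, by rw [hi]; exact hxP⟩⟩
      set i₀ := (Finset.univ.filter (fun i : Fin l.length => x ∈ l.get i)).min' hne
      have hi₀ : x ∈ l.get i₀ :=
        (Finset.mem_filter.mp ((Finset.univ.filter _).min'_mem hne)).2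
      refine Set.mem_iUnion.mpr ⟨i₀, hi₀, ?_⟩
      intro hx'
      simp only [Set.mem_iUnion, exists_prop] at hx'
      obtain ⟨j, hj, hxj⟩ := hx'
      have hji : j < i₀ := (Finset.mem_filter.mp hj).2
      exact absurd (Finset.min'_le _ j (Finset.mem_filter.mpr ⟨Finset.mem_univ j, hxj⟩))
        (not_le.mpr hji)
    · intro hx
      obtain ⟨i, hxi⟩ := Set.mem_iUnion.mp hx
      exact ⟨l.get i, Finset.mem_coe.mpr (hmem i), hYs_sub i hxi⟩
  · intro i
    obtain ⟨_, L, hL, hsubL, β, haff, heq⟩ := h𝒮 _ (hmem i)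
    exact ⟨L, hL, (hYs_sub i).trans hsubL, β, haff, heq.mono (hYs_sub i)⟩


set_option maxHeartbeats 2000000 in
lemma almostPW_piece (α : H → G) (Y : Set H) :
    ∀ (m : ℕ) (C : Set (H × G)) (𝒟 : Finset (Set (H × G))), 𝒟.card = m →
    CosE C → (∀ D ∈ 𝒟, CosE D ∧ D ⊆ C) →
    C \ ⋃₀ ↑𝒟 ⊆ _root_.graphOn α Y →
    AlmostPW α (Prod.fst '' (C \ ⋃₀ ↑𝒟)) := by
  classical
  intro m
  induction m using Nat.strong_induction_on with
  | _ m ih =>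
  intro C 𝒟 hcard hC h𝒟 hgraph
  rcases hC with hC | rfl
  swap
  · rw [Set.empty_diff, Set.image_empty]
    exact AlmostPW_empty α
  obtain ⟨N, c, rfl⟩ := hC
  by_cases hemp : ∅ ∈ 𝒟
  · have hU : ⋃₀ (↑(𝒟.erase ∅) : Set (Set (H × G))) = ⋃₀ ↑𝒟 := by
      ext x
      constructor
      · rintro ⟨D, hD, hx⟩
        exact ⟨D, Finset.mem_coe.mpr (Finset.mem_of_mem_erase (Finset.mem_coe.mp hD)), hx⟩
      · rintro ⟨D, hD, hx⟩
        refine ⟨D, Finset.mem_coe.mpr (Finset.mem_erase.mpr ⟨?_, Finset.mem_coe.mp hD⟩), hx⟩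
        rintro rfl
        exact hx
    rw [← hU]
    rw [← hU] at hgraph
    exact ih (𝒟.erase ∅).card (hcard ▸ Finset.card_erase_lt_of_mem hemp) _ _ rfl
      (Or.inl ⟨N, c, rfl⟩) (fun D hD => h𝒟 D (Finset.mem_of_mem_erase hD)) hgraph
  have hcosets : ∀ D ∈ 𝒟, IsCoset D := by
    intro D hD
    rcases (h𝒟 D hD).1 with h | rfl
    · exact h
    · exact absurd hD hemp
  have hDsubC : ∀ D ∈ 𝒟, D ⊆ c • (N : Set (H × G)) := fun D hD => (h𝒟 D hD).2
  have hnorm : ∀ D ∈ 𝒟, ∃ (M : Subgroup (H × G)) (x : H × G),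
      x ∈ D ∧ M ≤ N ∧ D = x • (M : Set (H × G)) :=
    fun D hD => subcoset_norm (hcosets D hD) (hDsubC D hD)
  by_cases hfin : ∃ D ∈ 𝒟, ∃ (M : Subgroup (H × G)) (x : H × G),
      x ∈ D ∧ M ≤ N ∧ D = x • (M : Set (H × G)) ∧ (M.subgroupOf N).FiniteIndex
  -- Case (a): some subtracted coset has finite relative index: split C along its cosets
  · obtain ⟨D, hD𝒟, M, x, hxD, hMN, hDeq, hMfin⟩ := hfin
    obtain ⟨t, htN, htcov⟩ := coset_cover_of_relindex hMN hMfin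
    have hCcov : ∀ p : H × G, p ∈ c • (N : Set (H × G)) ↔
        ∃ y ∈ t, p ∈ (c * y) • (M : Set (H × G)) := by
      intro p
      rw [Set.mem_smul_set_iff_inv_smul_mem, smul_eq_mul]
      constructor
      · intro hp
        have hp' : c⁻¹ * p ∈ ⋃ y ∈ t, y • (M : Set (H × G)) := by
          rw [← htcov]; exact hp
        simp only [Set.mem_iUnion, exists_prop] at hp'
        obtain ⟨y, hy, hm⟩ := hp'
        rw [Set.mem_smul_set_iff_inv_smul_mem, smul_eq_mul] at hm
        refine ⟨y, hy, ?_⟩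
        rw [Set.mem_smul_set_iff_inv_smul_mem, smul_eq_mul]
        have heq : (c * y)⁻¹ * p = y⁻¹ * (c⁻¹ * p) := by group
        rw [heq]
        exact hm
      · rintro ⟨y, hy, hm⟩
        rw [Set.mem_smul_set_iff_inv_smul_mem, smul_eq_mul] at hm
        have hm' : c⁻¹ * p ∈ y • (M : Set (H × G)) := by
          rw [Set.mem_smul_set_iff_inv_smul_mem, smul_eq_mul]
          have heq : y⁻¹ * (c⁻¹ * p) = (c * y)⁻¹ * p := by group
          rw [heq]
          exact hm
        have : c⁻¹ * p ∈ ⋃ y ∈ t, y • (M : Set (H × G)) := Set.mem_biUnion hy hm'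
        rwa [← htcov] at this
    have hAy : ∀ y ∈ t, AlmostPW α
        (Prod.fst '' (((c * y) • (M : Set (H × G))) \ ⋃₀ ↑𝒟)) := by
      intro y hy
      set Cy : Set (H × G) := ((c * y) • (M : Set (H × G))) \ D with hCy
      have hCyE : CosE Cy := by
        rcases coset_eq_or_disjoint M (c * y) x with heq | hdis
        · right
          rw [hCy, hDeq, heq, Set.diff_self]
        · left
          have hds : ((c * y) • (M : Set (H × G))) \ D = (c * y) • (M : Set (H × G)) := by
            rw [hDeq]
            ext p
            constructor
            · exact fun hp => hp.1
            · intro hp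
              refine ⟨hp, fun hpx => ?_⟩
              have : p ∈ ((c * y) • (M : Set (H × G))) ∩ (x • (M : Set (H × G))) :=
                ⟨hp, hpx⟩
              rw [hdis] at this
              exact this
          rw [hCy, hds]
          exact ⟨M, c * y, rfl⟩
      set 𝒟y : Finset (Set (H × G)) := (𝒟.erase D).image (fun E => E ∩ Cy) with h𝒟y
      have hPy : Cy \ ⋃₀ ↑𝒟y = ((c * y) • (M : Set (H × G))) \ ⋃₀ ↑𝒟 := by
        ext p
        constructor
        · rintro ⟨⟨hpM, hpD⟩, hp𝒟y⟩
          refine ⟨hpM, ?_⟩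
          rintro ⟨E, hE, hpE⟩
          have hE' := Finset.mem_coe.mp hE
          by_cases hED : E = D
          · exact hpD (hED ▸ hpE)
          · exact hp𝒟y ⟨E ∩ Cy, Finset.mem_coe.mpr (Finset.mem_image_of_mem _
              (Finset.mem_erase.mpr ⟨hED, hE'⟩)), hpE, hpM, hpD⟩
        · rintro ⟨hpM, hp𝒟⟩
          have hpD : p ∉ D := fun hpD => hp𝒟 ⟨D, Finset.mem_coe.mpr hD𝒟, hpD⟩
          refine ⟨⟨hpM, hpD⟩, ?_⟩
          rintro ⟨E', hE', hpE'⟩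
          obtain ⟨E, hE, rfl⟩ := Finset.mem_image.mp (Finset.mem_coe.mp hE')
          exact hp𝒟 ⟨E, Finset.mem_coe.mpr (Finset.mem_of_mem_erase hE), hpE'.1⟩
      have hlt : 𝒟y.card < m := by
        calc 𝒟y.card ≤ (𝒟.erase D).card := Finset.card_image_le
        _ < 𝒟.card := Finset.card_erase_lt_of_mem hD𝒟
        _ = m := hcard
      have h𝒟y' : ∀ E' ∈ 𝒟y, CosE E' ∧ E' ⊆ Cy := by
        intro E' hE'
        obtain ⟨E, hE, rfl⟩ := Finset.mem_image.mp hE'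
        exact ⟨CosE.inter (Or.inl (hcosets E (Finset.mem_of_mem_erase hE))) hCyE,
          Set.inter_subset_right⟩
      have hgr : Cy \ ⋃₀ ↑𝒟y ⊆ _root_.graphOn α Y := by
        rw [hPy]
        intro p hp
        exact hgraph ⟨(hCcov p).mpr ⟨y, hy, hp.1⟩, hp.2⟩
      have := ih 𝒟y.card hlt Cy 𝒟y rfl hCyE h𝒟y' hgr
      rwa [hPy] at this
    have hsplit : (c • (N : Set (H × G))) \ ⋃₀ ↑𝒟
        = ⋃ y ∈ t, (((c * y) • (M : Set (H × G))) \ ⋃₀ ↑𝒟) := by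
      ext p
      constructor
      · rintro ⟨hpC, hp⟩
        obtain ⟨y, hy, hpM⟩ := (hCcov p).mp hpC
        exact Set.mem_biUnion hy ⟨hpM, hp⟩
      · intro hp
        simp only [Set.mem_iUnion, exists_prop] at hp
        obtain ⟨y, hy, hpM, hpd⟩ := hp
        exact ⟨(hCcov p).mpr ⟨y, hy, hpM⟩, hpd⟩
    rw [hsplit, Set.image_iUnion₂]
    exact AlmostPW_biUnion t _ hAy
  -- Case (b): all subtracted cosets have infinite relative index
  · push_neg at hfin
    choose! Mf xf hxf hMfle hDeqf using hnorm
    have hK : ∀ g : G, ((1 : H), g) ∈ N → g = 1 := by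
      intro g hgN
      by_contra hg1
      set w : H × G := ((1 : H), g) with hw
      have hwinv : w⁻¹ ∈ N := N.inv_mem hgN
      set Mfun : Set (H × G) × Bool → Subgroup (H × G) := fun j =>
        if j.2 then (Mf j.1).comap (MulAut.conj w⁻¹).toMonoidHom else Mf j.1 with hMfun
      set xfun : Set (H × G) × Bool → H × G := fun j =>
        if j.2 then c⁻¹ * xf j.1 * w⁻¹ else c⁻¹ * xf j.1 with hxfun
      set s : Finset (Set (H × G) × Bool) := 𝒟 ×ˢ ({false, true} : Finset Bool) with hs
      have hbase : ∀ D ∈ 𝒟, c⁻¹ * xf D ∈ N := by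
        intro D hD
        have := hDsubC D hD (hxf D hD)
        rwa [Set.mem_smul_set_iff_inv_smul_mem, smul_eq_mul] at this
      have hxmem : ∀ j ∈ s, xfun j ∈ N := by
        intro j hj
        obtain ⟨hj1, _⟩ := Finset.mem_product.mp hj
        by_cases hb : j.2
        · simp only [hxfun]
          rw [if_pos hb]
          exact N.mul_mem (hbase j.1 hj1) hwinv
        · simp only [hxfun]
          rw [if_neg hb]
          exact hbase j.1 hj1
      have hcov : (N : Set (H × G)) ⊆ ⋃ j ∈ s, xfun j • ((Mfun j : Subgroup _) :
          Set (H × G)) := by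
        intro n hn
        rw [SetLike.mem_coe] at hn
        have hcn : c * n ∈ c • (N : Set (H × G)) := by
          rw [Set.mem_smul_set_iff_inv_smul_mem, smul_eq_mul]
          simpa using hn
        by_cases hmem : c * n ∈ ⋃₀ (↑𝒟 : Set (Set (H × G)))
        · obtain ⟨D, hD, hpD⟩ := hmem
          have hD' := Finset.mem_coe.mp hD
          rw [hDeqf D hD', Set.mem_smul_set_iff_inv_smul_mem, smul_eq_mul] at hpD
          have hjs : ((D, false) : Set (H × G) × Bool) ∈ s :=
            Finset.mem_product.mpr ⟨hD', by simp⟩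
          refine Set.mem_biUnion hjs ?_
          show n ∈ (c⁻¹ * xf D) • ((Mf D : Subgroup _) : Set (H × G))
          rw [Set.mem_smul_set_iff_inv_smul_mem, smul_eq_mul]
          have heq : (c⁻¹ * xf D)⁻¹ * n = (xf D)⁻¹ * (c * n) := by group
          rw [heq]
          exact hpD
        · have hq : c * n * w ∈ c • (N : Set (H × G)) := by
            rw [Set.mem_smul_set_iff_inv_smul_mem, smul_eq_mul]
            have heq : c⁻¹ * (c * n * w) = n * w := by group
            rw [heq]
            exact N.mul_mem hn hgN
          by_cases hmem2 : c * n * w ∈ ⋃₀ (↑𝒟 : Set (Set (H × G)))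
          · obtain ⟨D, hD, hpD⟩ := hmem2
            have hD' := Finset.mem_coe.mp hD
            rw [hDeqf D hD', Set.mem_smul_set_iff_inv_smul_mem, smul_eq_mul] at hpD
            have hjs : ((D, true) : Set (H × G) × Bool) ∈ s :=
              Finset.mem_product.mpr ⟨hD', by simp⟩
            refine Set.mem_biUnion hjs ?_
            show n ∈ (c⁻¹ * xf D * w⁻¹) •
              (((Mf D).comap (MulAut.conj w⁻¹).toMonoidHom : Subgroup _) : Set (H × G))
            rw [Set.mem_smul_set_iff_inv_smul_mem, smul_eq_mul, SetLike.mem_coe,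
              Subgroup.mem_comap]
            have heq : (MulAut.conj w⁻¹).toMonoidHom ((c⁻¹ * xf D * w⁻¹)⁻¹ * n)
                = (xf D)⁻¹ * (c * n * w) := by
              simp only [MulEquiv.coe_toMonoidHom, MulAut.conj_apply]
              group
            rw [heq]
            exact hpD
          · exfalso
            have h1 := hgraph ⟨hcn, hmem⟩
            have h2 := hgraph ⟨hq, hmem2⟩
            have hfst : (c * n * w).1 = (c * n).1 := by
              simp [hw]
            have hsnd : (c * n * w).2 = (c * n).2 * g := by
              simp [hw]
            have : (c * n).2 * g = (c * n).2 := by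
              rw [← hsnd, h2.2, h1.2, hfst]
            exact hg1 (mul_left_cancel ((this.trans (mul_one _).symm)))
      obtain ⟨j, hjs, hjfin⟩ := exists_finite_relindex_of_cover s Mfun xfun hxmem hcov
      obtain ⟨hj1, _⟩ := Finset.mem_product.mp hjs
      have hjfin' : ((Mf j.1).subgroupOf N).FiniteIndex := by
        by_cases hb : j.2
        · apply finite_relindex_of_comap_conj hwinv
          have hMj : Mfun j = (Mf j.1).comap (MulAut.conj w⁻¹).toMonoidHom := by
            simp only [hMfun]
            rw [if_pos hb]
          rwa [hMj] at hjfin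
        · have hMj : Mfun j = Mf j.1 := by
            simp only [hMfun]
            rw [if_neg hb]
          rwa [hMj] at hjfin
      exact hfin j.1 hj1 (Mf j.1) (xf j.1) (hxf j.1 hj1) (hMfle j.1 hj1)
        (hDeqf j.1 hj1) hjfin'
    -- C is the graph of an affine map
    have hCfib : ∀ p ∈ c • (N : Set (H × G)), ∀ q ∈ c • (N : Set (H × G)),
        p.1 = q.1 → p.2 = q.2 := by
      intro p hp q hq h1
      rw [Set.mem_smul_set_iff_inv_smul_mem, smul_eq_mul] at hp hq
      have hpq : p⁻¹ * q ∈ N := by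
        have hmul := N.mul_mem (N.inv_mem hp) hq
        have heq : (c⁻¹ * p)⁻¹ * (c⁻¹ * q) = p⁻¹ * q := by group
        rwa [heq] at hmul
      have hfst : (p⁻¹ * q).1 = 1 := by
        simp [h1]
      have hform : p⁻¹ * q = ((1 : H), (p⁻¹ * q).2) := Prod.ext hfst rfl
      have h2 := hK (p⁻¹ * q).2 (hform ▸ hpq)
      have h3 : p.2⁻¹ * q.2 = 1 := by simpa using h2
      exact (inv_mul_eq_one.mp h3)
    set L : Set H := Prod.fst '' (c • (N : Set (H × G))) with hLdef
    have hLcoset : IsCoset L := IsCoset.fst_image ⟨N, c, rfl⟩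
    have hex : ∀ h ∈ L, ∃ g', (h, g') ∈ c • (N : Set (H × G)) := by
      rintro h ⟨p, hp, rfl⟩
      exact ⟨p.2, by rwa [Prod.mk.eta]⟩
    choose! β hβC using hex
    have hβeq : ∀ p ∈ c • (N : Set (H × G)), β p.1 = p.2 := by
      intro p hp
      exact hCfib (p.1, β p.1) (hβC p.1 ⟨p, hp, rfl⟩) p hp rfl
    have hCmul : ∀ p ∈ c • (N : Set (H × G)), ∀ q ∈ c • (N : Set (H × G)),
        ∀ r ∈ c • (N : Set (H × G)), p * q⁻¹ * r ∈ c • (N : Set (H × G)) := by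
      intro p hp q hq r hr
      rw [Set.mem_smul_set_iff_inv_smul_mem, smul_eq_mul] at hp hq hr ⊢
      have heq : c⁻¹ * (p * q⁻¹ * r) = (c⁻¹ * p) * (c⁻¹ * q)⁻¹ * (c⁻¹ * r) := by group
      rw [heq]
      exact N.mul_mem (N.mul_mem hp (N.inv_mem hq)) hr
    have haff : IsAffineOn β L := by
      intro r hr s hs t ht
      have h1 := hβC r hr
      have h2 := hβC s hs
      have h3 := hβC t ht
      have hm := hCmul _ h1 _ h2 _ h3
      have hprod : ((r, β r) : H × G) * (s, β s)⁻¹ * (t, β t)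
          = (r * s⁻¹ * t, β r * (β s)⁻¹ * β t) := rfl
      rw [hprod] at hm
      exact hβeq _ hm
    have hfstP : Prod.fst '' (c • (N : Set (H × G)) \ ⋃₀ ↑𝒟)
        = L \ ⋃ D ∈ 𝒟, Prod.fst '' D := by
      ext h
      constructor
      · rintro ⟨p, ⟨hpC, hp𝒟⟩, rfl⟩
        refine ⟨⟨p, hpC, rfl⟩, ?_⟩
        intro hmem
        simp only [Set.mem_iUnion, exists_prop] at hmem
        obtain ⟨D, hD, q, hqD, hqh⟩ := hmem
        have hqC := hDsubC D hD hqD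
        have hqp : q = p := Prod.ext hqh (hCfib q hqC p hpC hqh)
        exact hp𝒟 ⟨D, Finset.mem_coe.mpr hD, hqp ▸ hqD⟩
      · rintro ⟨⟨p, hpC, rfl⟩, hnD⟩
        refine ⟨p, ⟨hpC, ?_⟩, rfl⟩
        rintro ⟨D, hD, hpD⟩
        refine hnD ?_
        simp only [Set.mem_iUnion, exists_prop]
        exact ⟨D, Finset.mem_coe.mp hD, p, hpD, rfl⟩
    have hring : InCosetRing H (L \ ⋃ D ∈ 𝒟, Prod.fst '' D) :=
      (InCosetRing.of_isCoset hLcoset).sdiff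
        (inCosetRing_biUnion 𝒟 _ fun D hD =>
          InCosetRing.of_isCoset (IsCoset.fst_image (hcosets D hD)))
    refine ⟨{L \ ⋃ D ∈ 𝒟, Prod.fst '' D}, ?_, by simp [hfstP]⟩
    intro Y' hY'
    rw [Finset.mem_singleton] at hY'
    subst hY'
    refine ⟨hring, L, hLcoset, Set.diff_subset, β, haff, ?_⟩
    intro h hh
    rw [← hfstP] at hh
    obtain ⟨p, hpP, rfl⟩ := hh
    have hpg := hgraph hpP
    rw [hβeq p hpP.1]
    exact hpg.2


end Main

/-- If the graph of `α : Y → G` belongs to the coset ring of `H × G`, then `α` is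
piecewise affine. -/
theorem piecewiseAffine_of_graph_in_cosetRing {H G : Type*} [Group H] [Group G]
    (Y : Set H) (α : H → G) (h : InCosetRing (H × G) (graphOn α Y)) :
    IsPiecewiseAffineOn α Y := by
  classical
  obtain ⟨𝒮, h𝒮, hU⟩ := h.fu
  have hsub : ∀ P ∈ 𝒮, P ⊆ graphOn α Y := by
    intro P hP
    rw [hU]
    exact Set.subset_sUnion_of_mem (Finset.mem_coe.mpr hP)
  have hYimg : Prod.fst '' graphOn α Y = Y := by
    ext x
    constructor
    · rintro ⟨p, hp, rfl⟩; exact hp.1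
    · intro hx; exact ⟨(x, α x), ⟨hx, rfl⟩, rfl⟩
  have hA : AlmostPW α Y := by
    rw [← hYimg, hU, Set.sUnion_eq_biUnion, Set.image_iUnion₂]
    refine AlmostPW_biUnion 𝒮 _ ?_
    intro P hP
    obtain ⟨C, 𝒟, hC, h𝒟, hPeq⟩ := h𝒮 P hP
    rw [hPeq]
    exact almostPW_piece α Y 𝒟.card C 𝒟 rfl hC h𝒟 (hPeq ▸ hsub P hP)
  exact isPiecewiseAffineOn_of_almostPW hA
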